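/- Let γ : ℝ → ℂ be a continuously differentiable, 2π-periodic immersed closed curve (γ'(t) ≠ 0 for all t), parametrized so that γ restricted to [0,2π) is the curve. Then (1/2π) ∫₀^{2π} κ(t) |γ'(t)| dt is an integer, where κ(t)|γ'(t)| = Im(γ''(t) · conj(γ'(t)))/|γ'(t)|² is the curvature density. Moreover it equals the winding number of the tangent map t ↦ γ'(t)/|γ'(t)| around 0. -/

import Mathlib

open Real Complex

/-- Hopf's Umlaufsatz: for a `C²`, `2π`-periodic immersed closed plane curve `γ`,
the total curvature `(1/2π) ∫₀^{2π} κ(t)|γ'(t)| dt`, where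
`κ(t)|γ'(t)| = Im(γ''(t) conj(γ'(t)))/|γ'(t)|²`, is an integer, equal to the winding
number of the unit tangent map around `0` (computed via a continuous angle lift `φ`). -/
theorem stmt6 (γ : ℝ → ℂ) (hγ : ContDiff ℝ 2 γ)
    (hper : Function.Periodic γ (2 * Real.pi))
    (himm : ∀ t, deriv γ t ≠ 0)
    (φ : ℝ → ℝ) (hφ : Continuous φ)
    (hlift : ∀ t, deriv γ t / (‖deriv γ t‖ : ℂ) = Complex.exp (φ t * Complex.I)) :
    ∃ n : ℤ,
      (1 / (2 * Real.pi)) * ∫ t in (0:ℝ)..(2 * Real.pi),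
        (deriv (deriv γ) t * (starRingEnd ℂ) (deriv γ t)).im / (‖deriv γ t‖) ^ 2
        = (n : ℝ) ∧
      (n : ℝ) = (φ (2 * Real.pi) - φ 0) / (2 * Real.pi) := by
  have hγ2 : ContDiff ℝ ((1:ℕ)+1) γ := by exact_mod_cast hγ
  have hcd : ContDiff ℝ 1 (deriv γ) := (contDiff_succ_iff_deriv.mp hγ2).2.2
  have hc1 : Continuous (deriv γ) := hcd.continuous
  have hc2 : Continuous (deriv (deriv γ)) := (contDiff_one_iff_deriv.mp hcd).2
  have hd1 : Differentiable ℝ (deriv γ) := (contDiff_one_iff_deriv.mp hcd).1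
  -- the complex logarithmic derivative integrand
  set F : ℝ → ℂ := fun t => deriv (deriv γ) t / deriv γ t with hF
  have hFc : Continuous F := hc2.div hc1 himm
  set ρ : ℝ → ℂ := fun t => ∫ s in (0:ℝ)..t, F s with hρdef
  have hρ : ∀ t, HasDerivAt ρ (F t) t := fun t =>
    (hFc.integral_hasStrictDerivAt 0 t).hasDerivAt
  have hρc : Continuous ρ := by
    rw [continuous_iff_continuousAt]; exact fun t => (hρ t).continuousAt
  have hρ0 : ρ 0 = 0 := intervalIntegral.integral_same
  -- w = γ' · exp(-ρ) is constant
  set w : ℝ → ℂ := fun t => deriv γ t * Complex.exp (-ρ t) with hw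
  have hw' : ∀ t, HasDerivAt w 0 t := by
    intro t
    have h1 : HasDerivAt (deriv γ) (deriv (deriv γ) t) t := (hd1 t).hasDerivAt
    have h2 : HasDerivAt (fun t => Complex.exp (-ρ t))
        (Complex.exp (-ρ t) * (-F t)) t := ((hρ t).neg).cexp
    have hFmul : F t * deriv γ t = deriv (deriv γ) t := div_mul_cancel₀ _ (himm t)
    have := h1.mul h2
    have e : deriv (deriv γ) t * Complex.exp (-ρ t) + deriv γ t * (Complex.exp (-ρ t) * -F t)
        = 0 := by rw [← hFmul]; ring
    rw [e] at this
    exact this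
  have hwc : ∀ t, w t = w 0 := by
    have hdw : ∀ t, deriv w t = 0 := fun t => (hw' t).deriv
    intro t
    exact is_const_of_deriv_eq_zero (fun s => (hw' s).differentiableAt) hdw t 0
  have hkey : ∀ t, deriv γ t = deriv γ 0 * Complex.exp (ρ t) := by
    intro t
    have hc := hwc t
    simp only [hw, hρ0, neg_zero, Complex.exp_zero, mul_one] at hc
    calc deriv γ t = deriv γ t * Complex.exp (-ρ t) * Complex.exp (ρ t) := by
          rw [mul_assoc, ← Complex.exp_add]; simp
    _ = deriv γ 0 * Complex.exp (ρ t) := by rw [hc]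
  -- unit tangent in terms of ρ.im
  have hlift2 : ∀ t, Complex.exp ((φ t) * Complex.I) =
      Complex.exp ((φ 0 + (ρ t).im) * Complex.I) := by
    intro t
    have h0 := hlift 0
    have habs0 : (‖deriv γ 0‖ : ℂ) ≠ 0 := by simpa using himm 0
    have hsplit : Complex.exp (ρ t) =
        Complex.exp ((ρ t).re) * Complex.exp ((ρ t).im * Complex.I) := by
      rw [← Complex.exp_add]; congr 1; exact (Complex.re_add_im (ρ t)).symm
    rw [← hlift t, hkey t, norm_mul, Complex.norm_exp]
    push_cast
    rw [add_mul, Complex.exp_add, ← h0, hsplit]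
    have hexpne := Complex.exp_ne_zero ((ρ t).re : ℂ)
    field_simp
  -- the difference of the two lifts, divided by 2π, is integer valued
  have hint : ∀ t, ∃ m : ℤ, φ t - (φ 0 + (ρ t).im) = m * (2 * Real.pi) := by
    intro t
    have h1 : Complex.exp ((φ t) * Complex.I - (φ 0 + (ρ t).im) * Complex.I) = 1 := by
      rw [Complex.exp_sub, hlift2 t, div_self (Complex.exp_ne_zero _)]
    rw [Complex.exp_eq_one_iff] at h1
    obtain ⟨m, hm⟩ := h1
    refine ⟨m, ?_⟩
    have him := congrArg Complex.im hm
    simp [Complex.sub_im, Complex.mul_im, Complex.add_re, Complex.add_im] at him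
    push_cast at him ⊢
    linarith [him]
  -- h is continuous, h 0 = 0, and h takes values in 2πℤ, hence h ≡ 0
  set h : ℝ → ℝ := fun t => φ t - (φ 0 + (ρ t).im) with hh
  have hhc : Continuous h := hφ.sub (continuous_const.add (Complex.continuous_im.comp hρc))
  have hh0 : h 0 = 0 := by simp [hh, hρ0]
  have hzero : ∀ t, h t = 0 := by
    intro t
    by_contra hne
    obtain ⟨m, hm⟩ := hint t
    have hm' : h t = m * (2 * Real.pi) := hm
    have hm0 : m ≠ 0 := by
      rintro rfl; apply hne; simpa using hm'
    have hπ : (0:ℝ) < Real.pi := Real.pi_pos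
    have hivt := intermediate_value_uIcc (a := 0) (b := t) (f := h) hhc.continuousOn
    rcases lt_or_gt_of_ne hm0 with hneg | hpos
    · have hle : h t ≤ -(2 * Real.pi) := by
        rw [hm']
        have : (m:ℝ) ≤ -1 := by exact_mod_cast (by omega : m ≤ -1)
        nlinarith
      have hmem : -Real.pi ∈ Set.uIcc (h 0) (h t) := by
        rw [hh0]
        exact Set.mem_uIcc.mpr (Or.inr ⟨by linarith, by linarith⟩)
      obtain ⟨s, _, hs⟩ := hivt hmem
      obtain ⟨m', hm2⟩ := hint s
      have hs2 : φ s - (φ 0 + (ρ s).im) = -Real.pi := hs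
      have hprod : ((2*m' + 1 : ℝ)) * Real.pi = 0 := by
        push_cast
        linear_combination hs2 - hm2
      rcases mul_eq_zero.mp hprod with hq | hq
      · have : (2*m' + 1 : ℤ) = 0 := by exact_mod_cast hq
        omega
      · exact absurd hq Real.pi_ne_zero
    · have hle : 2 * Real.pi ≤ h t := by
        rw [hm']
        have : (1:ℝ) ≤ (m:ℝ) := by exact_mod_cast hpos
        nlinarith
      have hmem : Real.pi ∈ Set.uIcc (h 0) (h t) := by
        rw [hh0]
        exact Set.mem_uIcc.mpr (Or.inl ⟨by linarith, by linarith⟩)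
      obtain ⟨s, _, hs⟩ := hivt hmem
      obtain ⟨m', hm2⟩ := hint s
      have hs2 : φ s - (φ 0 + (ρ s).im) = Real.pi := hs
      have hprod : ((2*m' - 1 : ℝ)) * Real.pi = 0 := by
        push_cast
        linear_combination hs2 - hm2
      rcases mul_eq_zero.mp hprod with hq | hq
      · have : (2*m' - 1 : ℤ) = 0 := by exact_mod_cast hq
        omega
      · exact absurd hq Real.pi_ne_zero
  have hφρ : ∀ t, φ t - φ 0 = (ρ t).im := by
    intro t
    have hz := hzero t
    simp only [hh] at hz
    linarith
  -- the integrand of the goal is the imaginary part of F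
  have hFim : ∀ t, (F t).im =
      (deriv (deriv γ) t * (starRingEnd ℂ) (deriv γ t)).im / (‖deriv γ t‖) ^ 2 := by
    intro t
    have hns : (((‖deriv γ t‖) ^ 2 : ℝ) : ℂ) =
        deriv γ t * (starRingEnd ℂ) (deriv γ t) := by
      rw [Complex.mul_conj, ← Complex.sq_norm]
    have hconj : (starRingEnd ℂ) (deriv γ t) ≠ 0 := by simp [himm t]
    have hFt : F t = deriv (deriv γ) t * (starRingEnd ℂ) (deriv γ t) /
        (((‖deriv γ t‖) ^ 2 : ℝ) : ℂ) := by
      rw [hns, hF]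
      exact (mul_div_mul_right _ _ hconj).symm
    rw [hFt, Complex.div_ofReal_im]
  have hρim : (ρ (2 * Real.pi)).im =
      ∫ t in (0:ℝ)..(2 * Real.pi),
        (deriv (deriv γ) t * (starRingEnd ℂ) (deriv γ t)).im / (‖deriv γ t‖) ^ 2 := by
    have hI : IntervalIntegrable F MeasureTheory.volume 0 (2 * Real.pi) :=
      hFc.intervalIntegrable _ _
    have hcomm := Complex.imCLM.intervalIntegral_comp_comm hI
    simp only [Complex.imCLM_apply] at hcomm
    rw [hρdef]
    simp only
    rw [← hcomm]
    exact intervalIntegral.integral_congr fun t _ => hFim t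
  -- periodicity gives the integer
  have hper' : deriv γ (2 * Real.pi) = deriv γ 0 := by
    have hfe : (fun x => γ (x + 2 * Real.pi)) = γ := funext fun x => hper x
    calc deriv γ (2 * Real.pi) = deriv γ (0 + 2 * Real.pi) := by norm_num
    _ = deriv (fun x => γ (x + 2 * Real.pi)) 0 := (deriv_comp_add_const γ _ 0).symm
    _ = deriv γ 0 := by rw [hfe]
  have hexp : Complex.exp ((φ (2 * Real.pi)) * Complex.I) =
      Complex.exp ((φ 0) * Complex.I) := by
    rw [← hlift, ← hlift, hper']
  have hex : ∃ n : ℤ, φ (2 * Real.pi) - φ 0 = n * (2 * Real.pi) := by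
    have h1 : Complex.exp ((φ (2 * Real.pi)) * Complex.I - (φ 0) * Complex.I) = 1 := by
      rw [Complex.exp_sub, hexp, div_self (Complex.exp_ne_zero _)]
    rw [Complex.exp_eq_one_iff] at h1
    obtain ⟨n, hn⟩ := h1
    refine ⟨n, ?_⟩
    have him := congrArg Complex.im hn
    simp [Complex.sub_im, Complex.mul_im] at him
    push_cast at him ⊢
    linarith [him]
  obtain ⟨n, hn⟩ := hex
  have h2π : (2 * Real.pi) ≠ 0 := by positivity
  refine ⟨n, ?_, ?_⟩
  · rw [← hρim, ← hφρ, hn]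
    field_simp
  · rw [hn]
    field_simp
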